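/- Let C and C' be linear codes over a finite field F_q of length n. If there is an F_q-linear bijection φ : C → C' preserving Hamming weight, then there exists an n×n monomial matrix M over F_q with C' = C·M; conversely, multiplication by a monomial matrix is a weight-preserving linear bijection. -/

import Mathlib

open scoped Classical
open Finset LinearMap

section Aux

variable {F : Type*} [Field F] [Fintype F]
variable {V : Type*} [AddCommGroup V] [Module F V] [Fintype V]

private lemma exists_ne_zero {lam : V →ₗ[F] F} (h : lam ≠ 0) : ∃ w, lam w ≠ 0 := by
  by_contra hc
  push_neg at hc
  exact h (LinearMap.ext fun v => by simp [hc v])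

private lemma card_ker_mul (lam : V →ₗ[F] F) (h : lam ≠ 0) :
    Fintype.card F * Nat.card (LinearMap.ker lam) = Nat.card V := by
  obtain ⟨w, hw⟩ := exists_ne_zero h
  have hsurj : Function.Surjective lam := fun a =>
    ⟨(a * (lam w)⁻¹) • w, by simp [mul_assoc, inv_mul_cancel₀ hw]⟩
  have h1 := AddSubgroup.card_eq_card_quotient_mul_card_addSubgroup
    (LinearMap.ker lam).toAddSubgroup
  have hq : Nat.card (V ⧸ LinearMap.ker lam) = Fintype.card F := by
    have e := (LinearMap.quotKerEquivRange lam).toEquiv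
    have hr : LinearMap.range lam = ⊤ := LinearMap.range_eq_top.mpr hsurj
    rw [Nat.card_congr e, hr]
    rw [Nat.card_congr (Submodule.topEquiv (R := F) (M := F)).toEquiv,
      Nat.card_eq_fintype_card]
  have h2 : Nat.card (V ⧸ (LinearMap.ker lam).toAddSubgroup) =
      Nat.card (V ⧸ LinearMap.ker lam) := rfl
  rw [h1, h2, hq]
  rfl

end Aux

set_option linter.unusedSectionVars false

section Counting

variable {F : Type*} [Field F] [Fintype F]
variable {V : Type*} [AddCommGroup V] [Module F V] [Fintype V]

private lemma cardW_pos (W : Submodule F V) :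
    0 < (univ.filter fun v => v ∈ W).card :=
  Finset.card_pos.mpr ⟨0, by simp [W.zero_mem]⟩

private lemma zero_count_le (W : Submodule F V) (lam : V →ₗ[F] F)
    (h : W ≤ LinearMap.ker lam) :
    (univ.filter fun v => v ∈ W ∧ lam v = 0).card = (univ.filter fun v => v ∈ W).card := by
  congr 1
  apply Finset.filter_congr
  intro v _
  simp only [and_iff_left_iff_imp]
  exact fun hv => LinearMap.mem_ker.mp (h hv)

private lemma zero_count_not_le (W : Submodule F V) (lam : V →ₗ[F] F)
    (h : ¬ W ≤ LinearMap.ker lam) :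
    Fintype.card F * (univ.filter fun v => v ∈ W ∧ lam v = 0).card
      = (univ.filter fun v => v ∈ W).card := by
  set g : ↥W →ₗ[F] F := lam.domRestrict W with hg
  have hgne : g ≠ 0 := by
    intro hc
    apply h
    intro v hv
    have : g ⟨v, hv⟩ = 0 := by rw [hc]; rfl
    simpa [hg, LinearMap.domRestrict_apply] using this
  have key := card_ker_mul g hgne
  have e : {v : V // v ∈ W ∧ lam v = 0} ≃ ↥(LinearMap.ker g) :=
    { toFun := fun x => ⟨⟨x.1, x.2.1⟩, x.2.2⟩
      invFun := fun y => ⟨y.1.1, ⟨y.1.2, y.2⟩⟩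
      left_inv := fun x => rfl
      right_inv := fun y => rfl }
  have h1 : (univ.filter fun v => v ∈ W ∧ lam v = 0).card
      = Nat.card (LinearMap.ker g) := by
    rw [← Fintype.card_subtype, ← Nat.card_eq_fintype_card, Nat.card_congr e]
  have h2 : (univ.filter fun v => v ∈ W).card = Nat.card ↥W := by
    rw [← Fintype.card_subtype, ← Nat.card_eq_fintype_card]
  rw [h1, h2, key]

end Counting

section Main

variable {F : Type*} [Field F] [Fintype F]
variable {V : Type*} [AddCommGroup V] [Module F V] [Fintype V]
variable {n : ℕ}

private lemma q_mul_T (lam : Fin n → (V →ₗ[F] F)) (W : Submodule F V) :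
    Fintype.card F *
      ∑ v ∈ univ.filter (fun v => v ∈ W), (univ.filter fun i => lam i v = 0).card
    = n * (univ.filter fun v => v ∈ W).card
      + (Fintype.card F - 1) * (univ.filter fun v => v ∈ W).card
          * (univ.filter fun i => W ≤ LinearMap.ker (lam i)).card := by
  set q := Fintype.card F with hq
  set cW := (univ.filter fun v => v ∈ W).card with hcW
  have hswap : ∑ v ∈ univ.filter (fun v => v ∈ W), (univ.filter fun i => lam i v = 0).card
      = ∑ i : Fin n, (univ.filter fun v => v ∈ W ∧ lam i v = 0).card := by
    have lhs : ∀ v, (univ.filter fun i => lam i v = 0).card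
        = ∑ i : Fin n, if lam i v = 0 then 1 else 0 := fun v => by
      rw [Finset.card_filter]
    simp_rw [lhs]
    rw [Finset.sum_comm]
    congr 1
    ext i
    rw [Finset.card_filter, Finset.sum_filter]
    congr 1
    ext v
    by_cases h1 : v ∈ W <;> by_cases h2 : lam i v = 0 <;> simp [h1, h2]
  rw [hswap, Finset.mul_sum]
  have hterm : ∀ i : Fin n, q * (univ.filter fun v => v ∈ W ∧ lam i v = 0).card
      = cW + (q - 1) * cW * (if W ≤ LinearMap.ker (lam i) then 1 else 0) := by
    intro i
    by_cases hle : W ≤ LinearMap.ker (lam i)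
    · rw [if_pos hle, zero_count_le W (lam i) hle, mul_one]
      have hqq : q - 1 + 1 = q := Nat.succ_pred_eq_of_pos Fintype.card_pos
      calc q * cW = (q - 1 + 1) * cW := by rw [hqq]
        _ = cW + (q - 1) * cW := by ring
    · rw [if_neg hle, zero_count_not_le W (lam i) hle]
      ring
  rw [Finset.sum_congr rfl (fun i _ => hterm i)]
  rw [Finset.sum_add_distrib, Finset.sum_const, Finset.card_univ, Fintype.card_fin,
    smul_eq_mul, ← Finset.mul_sum, ← Finset.card_filter]

private lemma count_le_ker (lam mu : Fin n → (V →ₗ[F] F))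
    (h : ∀ v : V, (univ.filter fun i => lam i v = 0).card
        = (univ.filter fun i => mu i v = 0).card)
    (W : Submodule F V) :
    (univ.filter fun i => W ≤ LinearMap.ker (lam i)).card
      = (univ.filter fun i => W ≤ LinearMap.ker (mu i)).card := by
  have h1 := q_mul_T lam W
  have h2 := q_mul_T mu W
  have hT : ∑ v ∈ univ.filter (fun v => v ∈ W), (univ.filter fun i => lam i v = 0).card
      = ∑ v ∈ univ.filter (fun v => v ∈ W), (univ.filter fun i => mu i v = 0).card :=
    Finset.sum_congr rfl (fun v _ => h v)
  rw [hT] at h1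
  rw [h1] at h2
  have hpos : 0 < (Fintype.card F - 1) * (univ.filter fun v => v ∈ W).card := by
    have : 1 < Fintype.card F := Fintype.one_lt_card
    have := cardW_pos (F := F) W
    exact Nat.mul_pos (by omega) (by omega)
  have := Nat.add_left_cancel h2
  exact Nat.eq_of_mul_eq_mul_left hpos this

private lemma card_lt_of_lt {W K : Submodule F V} (h : W < K) : Nat.card W < Nat.card K := by
  have hss : (W : Set V) ⊂ (K : Set V) := by
    rw [Set.ssubset_iff_of_subset (by exact_mod_cast h.le)]
    obtain ⟨x, hxK, hxW⟩ := SetLike.exists_of_lt h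
    exact ⟨x, hxK, hxW⟩
  have := Set.ncard_lt_ncard hss (Set.toFinite _)
  rwa [← Nat.card_coe_set_eq, ← Nat.card_coe_set_eq] at this

private lemma hsplit (f : Fin n → (V →ₗ[F] F)) (W : Submodule F V) :
    (univ.filter fun i => W ≤ LinearMap.ker (f i)).card
      = (univ.filter fun i => LinearMap.ker (f i) = W).card
        + (univ.filter fun i => W < LinearMap.ker (f i)).card := by
  have hu : univ.filter (fun i => W ≤ LinearMap.ker (f i))
      = univ.filter (fun i => LinearMap.ker (f i) = W)
        ∪ univ.filter (fun i => W < LinearMap.ker (f i)) := by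
    ext i
    simp only [Finset.mem_filter, Finset.mem_union, Finset.mem_univ, true_and]
    constructor
    · intro h
      rcases h.lt_or_eq with h1 | h1
      · exact Or.inr h1
      · exact Or.inl h1.symm
    · rintro (h | h)
      · exact h.ge
      · exact h.le
  rw [hu, Finset.card_union_of_disjoint]
  rw [Finset.disjoint_filter]
  intro i _ h1 h2
  exact absurd h1 (ne_of_gt h2)

private lemma count_ker_eq (lam mu : Fin n → (V →ₗ[F] F))
    (h : ∀ v : V, (univ.filter fun i => lam i v = 0).card
        = (univ.filter fun i => mu i v = 0).card)
    (W : Submodule F V) :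
    (univ.filter fun i => LinearMap.ker (lam i) = W).card
      = (univ.filter fun i => LinearMap.ker (mu i) = W).card := by
  by_cases hWtop : W = ⊤
  · subst hWtop
    have e1 : ∀ f : Fin n → (V →ₗ[F] F),
        univ.filter (fun i => LinearMap.ker (f i) = ⊤)
          = univ.filter (fun i => (⊤ : Submodule F V) ≤ LinearMap.ker (f i)) := by
      intro f; ext i; simp [top_le_iff, eq_comm]
    rw [e1 lam, e1 mu]
    exact count_le_ker lam mu h ⊤
  by_cases hWcard : Fintype.card F * Nat.card W = Nat.card V
  · -- hyperplane-sized W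
    have hlt : ∀ (f : Fin n → (V →ₗ[F] F)) i,
        (W < LinearMap.ker (f i)) ↔ (⊤ : Submodule F V) ≤ LinearMap.ker (f i) := by
      intro f i
      rw [top_le_iff]
      constructor
      · intro hWK
        by_cases hf : f i = 0
        · rw [hf]; exact LinearMap.ker_zero
        · exfalso
          have hc := card_ker_mul (f i) hf
          rw [← hWcard] at hc
          have := Nat.eq_of_mul_eq_mul_left (Fintype.card_pos) hc
          exact absurd this.symm (ne_of_lt (card_lt_of_lt hWK))
      · intro hK; rw [hK]; exact lt_top_iff_ne_top.mpr hWtop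
    have e2 : ∀ f : Fin n → (V →ₗ[F] F),
        univ.filter (fun i => W < LinearMap.ker (f i))
          = univ.filter (fun i => (⊤ : Submodule F V) ≤ LinearMap.ker (f i)) := by
      intro f; ext i; simp only [Finset.mem_filter, Finset.mem_univ, true_and]; exact hlt f i
    have h1 := hsplit lam W
    have h2 := hsplit mu W
    rw [e2 lam] at h1
    rw [e2 mu] at h2
    rw [count_le_ker lam mu h W] at h1
    rw [count_le_ker lam mu h ⊤] at h1
    omega
  · -- both fibers empty
    have he : ∀ f : Fin n → (V →ₗ[F] F),
        univ.filter (fun i => LinearMap.ker (f i) = W) = ∅ := by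
      intro f
      apply Finset.filter_false_of_mem
      intro i _ hker
      by_cases hf : f i = 0
      · rw [hf, LinearMap.ker_zero] at hker
        exact hWtop hker.symm
      · have hc := card_ker_mul (f i) hf
        rw [hker] at hc
        exact hWcard hc
    rw [he lam, he mu]

private lemma exists_perm {α : Type*} (f g : Fin n → α)
    (h : ∀ a : α, (univ.filter fun i => f i = a).card = (univ.filter fun i => g i = a).card) :
    ∃ σ : Equiv.Perm (Fin n), ∀ i, f i = g (σ i) := by
  have e : ∀ a : α, { i : Fin n // f i = a } ≃ { i : Fin n // g i = a } := fun a =>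
    Fintype.equivOfCardEq (by rw [Fintype.card_subtype, Fintype.card_subtype, h a])
  exact ⟨Equiv.ofFiberEquiv e, fun i => (Equiv.ofFiberEquiv_map e i).symm⟩

private lemma scalar_of_ker_eq (lam mu : V →ₗ[F] F)
    (h : LinearMap.ker lam = LinearMap.ker mu) :
    ∃ u : Fˣ, ∀ v, mu v = (u : F) * lam v := by
  by_cases hl : lam = 0
  · have hmu : mu = 0 := by
      rw [← LinearMap.ker_eq_top] at hl ⊢
      rw [← h, hl]
    exact ⟨1, fun v => by simp [hmu, hl]⟩
  · obtain ⟨w, hw⟩ := exists_ne_zero hl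
    have hmw : mu w ≠ 0 := by
      intro hc
      apply hw
      have : w ∈ LinearMap.ker mu := LinearMap.mem_ker.mpr hc
      rw [← h] at this
      exact LinearMap.mem_ker.mp this
    refine ⟨Units.mk0 (mu w * (lam w)⁻¹) (by
      exact mul_ne_zero hmw (inv_ne_zero hw)), fun v => ?_⟩
    have hv : v - ((lam v) * (lam w)⁻¹) • w ∈ LinearMap.ker lam := by
      rw [LinearMap.mem_ker, map_sub, map_smul, smul_eq_mul, mul_assoc,
        inv_mul_cancel₀ hw, mul_one, sub_self]
    rw [h, LinearMap.mem_ker, map_sub, map_smul, smul_eq_mul, sub_eq_zero] at hv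
    rw [hv, Units.val_mk0]
    field_simp

end Main

theorem macwilliams_extension (F : Type*) [Field F] [Fintype F] (n : ℕ)
    (C C' : Submodule F (Fin n → F)) :
    (∃ φ : C ≃ₗ[F] C', ∀ c : C,
        (Finset.univ.filter fun i => (c : Fin n → F) i ≠ 0).card =
        (Finset.univ.filter fun i => (φ c : Fin n → F) i ≠ 0).card) ↔
    (∃ (π : Equiv.Perm (Fin n)) (u : Fin n → Fˣ),
        (C' : Set (Fin n → F)) =
          (fun v : Fin n → F => fun i => (u i : F) * v (π i)) '' (C : Set (Fin n → F))) := by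
  constructor
  · rintro ⟨φ, hφ⟩
    haveI : Fintype ↥C := Fintype.ofFinite _
    set lam : Fin n → (↥C →ₗ[F] F) := fun i => (LinearMap.proj i).comp C.subtype with hlam
    set mu : Fin n → (↥C →ₗ[F] F) := fun i =>
      (LinearMap.proj i).comp (C'.subtype.comp (φ : ↥C →ₗ[F] ↥C')) with hmu
    have happ1 : ∀ (i : Fin n) (c : ↥C), lam i c = (c : Fin n → F) i := fun i c => rfl
    have happ2 : ∀ (i : Fin n) (c : ↥C), mu i c = (φ c : Fin n → F) i := fun i c => rfl
    have hcount : ∀ c : ↥C, (univ.filter fun i => lam i c = 0).card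
        = (univ.filter fun i => mu i c = 0).card := by
      intro c
      have h1 := Finset.card_filter_add_card_filter_not
        (s := univ) (p := fun i : Fin n => (c : Fin n → F) i ≠ 0)
      have h2 := Finset.card_filter_add_card_filter_not
        (s := univ) (p := fun i : Fin n => (φ c : Fin n → F) i ≠ 0)
      have e1 : univ.filter (fun i => lam i c = 0)
          = univ.filter (fun i : Fin n => ¬ (c : Fin n → F) i ≠ 0) := by
        ext i; simp [happ1]
      have e2 : univ.filter (fun i => mu i c = 0)
          = univ.filter (fun i : Fin n => ¬ (φ c : Fin n → F) i ≠ 0) := by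
        ext i; simp [happ2]
      rw [e1, e2]
      have h3 := hφ c
      omega
    obtain ⟨σ, hσ⟩ := exists_perm (fun i => LinearMap.ker (mu i))
      (fun i => LinearMap.ker (lam i))
      (fun W => count_ker_eq mu lam (fun v => (hcount v).symm) W)
    choose u hu using fun i => scalar_of_ker_eq (lam (σ i)) (mu i) (hσ i).symm
    refine ⟨σ, u, ?_⟩
    ext w
    simp only [Set.mem_image, SetLike.mem_coe]
    constructor
    · intro hw
      refine ⟨(φ.symm ⟨w, hw⟩ : Fin n → F), (φ.symm ⟨w, hw⟩).2, ?_⟩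
      funext i
      have h5 := hu i (φ.symm ⟨w, hw⟩)
      rw [happ2, happ1, φ.apply_symm_apply] at h5
      exact h5.symm
    · rintro ⟨v, hv, rfl⟩
      have h6 : (fun i => (u i : F) * v (σ i)) = (φ ⟨v, hv⟩ : Fin n → F) := by
        funext i
        have h7 := hu i ⟨v, hv⟩
        rw [happ2, happ1] at h7
        exact h7.symm
      rw [h6]
      exact (φ ⟨v, hv⟩).2
  · rintro ⟨π, u, hC'⟩
    set eL : (Fin n → F) →ₗ[F] (Fin n → F) :=
      { toFun := fun v => fun i => (u i : F) * v (π i)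
        map_add' := fun x y => by funext i; simp [mul_add]
        map_smul' := fun a x => by funext i; simp [smul_eq_mul]; ring } with heL
    set eR : (Fin n → F) →ₗ[F] (Fin n → F) :=
      { toFun := fun w => fun j => ((u (π.symm j) : F))⁻¹ * w (π.symm j)
        map_add' := fun x y => by funext i; simp [mul_add]
        map_smul' := fun a x => by funext i; simp [smul_eq_mul]; ring } with heR
    have hLR : eL.comp eR = LinearMap.id := by
      refine LinearMap.ext fun w => ?_
      funext i
      show (u i : F) * (((u (π.symm (π i)) : F))⁻¹ * w (π.symm (π i))) = w i
      rw [Equiv.symm_apply_apply, ← mul_assoc, mul_inv_cancel₀ (Units.ne_zero (u i)), one_mul]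
    have hRL : eR.comp eL = LinearMap.id := by
      refine LinearMap.ext fun w => ?_
      funext j
      show ((u (π.symm j) : F))⁻¹ * ((u (π.symm j) : F) * w (π (π.symm j))) = w j
      rw [Equiv.apply_symm_apply, ← mul_assoc,
        inv_mul_cancel₀ (Units.ne_zero (u (π.symm j))), one_mul]
    set e : (Fin n → F) ≃ₗ[F] (Fin n → F) := LinearEquiv.ofLinear eL eR hLR hRL with he
    have hmap : Submodule.map (e : (Fin n → F) →ₗ[F] (Fin n → F)) C = C' := by
      apply SetLike.coe_injective
      rw [Submodule.map_coe]
      exact hC'.symm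
    refine ⟨(e.submoduleMap C).trans (LinearEquiv.ofEq _ _ hmap), fun c => ?_⟩
    have hval : ((((e.submoduleMap C).trans (LinearEquiv.ofEq _ _ hmap)) c : ↥C') : Fin n → F)
        = fun i => (u i : F) * (c : Fin n → F) (π i) := rfl
    rw [hval]
    have e3 : univ.filter (fun i => (u i : F) * (c : Fin n → F) (π i) ≠ 0)
        = univ.filter (fun i => (c : Fin n → F) (π i) ≠ 0) := by
      ext i
      simp [Units.mul_right_eq_zero]
    rw [e3]
    exact Finset.card_equiv π.symm (fun i => by simp)
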